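/- For all A, B ∈ ℝ^{mn×mn}, the output of the bilinear computation satisfies ‖f(A,B)‖ ≤ ‖A‖ · ‖B‖ · ‖Y‖, where ‖·‖ denotes the Frobenius norm. -/
import Mathlib


open scoped BigOperators Matrix

/-- Frobenius norm of a real matrix. -/
noncomputable def frob {ι κ : Type*} [Fintype ι] [Fintype κ] (A : Matrix ι κ ℝ) : ℝ :=
  Real.sqrt (∑ i, ∑ j, (A i j) ^ 2)

/-- Frobenius norm of a 6-mode tensor. -/
noncomputable def frob6 {n : ℕ} (T : Fin n → Fin n → Fin n → Fin n → Fin n → Fin n → ℝ) : ℝ :=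
  Real.sqrt (∑ k, ∑ l, ∑ k', ∑ l', ∑ i, ∑ j, (T k l k' l' i j) ^ 2)

/-- The 6-mode tensor Y with entries y_{klk'l'ij} = Σ_r u_{klr} v_{k'l'r} w_{ijr}. -/
noncomputable def Ytens {n R : ℕ} (U V W : Fin n → Fin n → Fin R → ℝ) :
    Fin n → Fin n → Fin n → Fin n → Fin n → Fin n → ℝ :=
  fun k l k' l' i j => ∑ r, U k l r * V k' l' r * W i j r

/-- The exact matrix-multiplication tensor X, x_{klk'l'ij} = δ_{ki} δ_{l'j} δ_{lk'}. -/
def Xtens (n : ℕ) : Fin n → Fin n → Fin n → Fin n → Fin n → Fin n → ℝ :=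
  fun k l k' l' i j =>
    (if k = i then (1 : ℝ) else 0) * (if l' = j then (1 : ℝ) else 0) *
      (if l = k' then (1 : ℝ) else 0)

/-- The block bilinear computation f on (mn)×(mn) matrices indexed by Fin n × Fin m
(first index: block position, second index: position within the m×m block). -/
noncomputable def blinf {n R m : ℕ} (U V W : Fin n → Fin n → Fin R → ℝ)
    (A B : Matrix (Fin n × Fin m) (Fin n × Fin m) ℝ) :
    Matrix (Fin n × Fin m) (Fin n × Fin m) ℝ :=
  fun p q => ∑ r, W p.1 q.1 r *
    ∑ z, (∑ k, ∑ l, U k l r * A (k, p.2) (l, z)) *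
         (∑ k', ∑ l', V k' l' r * B (k', z) (l', q.2))

/-- κ = n⁻³ Σ_{i,j,l} (1 − Σ_r u_{ilr} v_{ljr} w_{ijr}). -/
noncomputable def kappa {n R : ℕ} (U V W : Fin n → Fin n → Fin R → ℝ) : ℝ :=
  ((n : ℝ) ^ 3)⁻¹ * ∑ i, ∑ j, ∑ l, (1 - ∑ r, U i l r * V l j r * W i j r)

/-- M = P S : block matrix with m×m block s(j)·I_m at block position (π(j), j). -/
def Mmat {n : ℕ} (m : ℕ) (s : Fin n → ℝ) (π : Equiv.Perm (Fin n)) :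
    Matrix (Fin n × Fin m) (Fin n × Fin m) ℝ :=
  fun p q => if p.1 = π q.1 ∧ p.2 = q.2 then s q.1 else 0

/-- The randomized bilinear computation f̂(A,B) = (1−κ)⁻¹ M₁ᵀ f(M₁AM₂ᵀ, M₂BM₃ᵀ) M₃. -/
noncomputable def fhat {n R : ℕ} (m : ℕ) (U V W : Fin n → Fin n → Fin R → ℝ)
    (s₁ s₂ s₃ : Fin n → ℝ) (π₁ π₂ π₃ : Equiv.Perm (Fin n))
    (A B : Matrix (Fin n × Fin m) (Fin n × Fin m) ℝ) :
    Matrix (Fin n × Fin m) (Fin n × Fin m) ℝ :=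
  (1 - kappa U V W)⁻¹ •
    ((Mmat m s₁ π₁)ᵀ *
      blinf U V W (Mmat m s₁ π₁ * A * (Mmat m s₂ π₂)ᵀ) (Mmat m s₂ π₂ * B * (Mmat m s₃ π₃)ᵀ) *
      Mmat m s₃ π₃)


/-! ### Auxiliary lemmas -/

lemma sum_prod_mul_aux {α β : Type*} [Fintype α] [Fintype β] (φ : α → ℝ) (ψ : β → ℝ) :
    ∑ t : α × β, φ t.1 * ψ t.2 = (∑ a, φ a) * (∑ b, ψ b) := by
  simp [Fintype.sum_prod_type, Finset.sum_mul_sum]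

lemma blinf_entry_aux {n R m : ℕ} (U V W : Fin n → Fin n → Fin R → ℝ)
    (A B : Matrix (Fin n × Fin m) (Fin n × Fin m) ℝ) (p q : Fin n × Fin m) :
    blinf U V W A B p q =
      ∑ k, ∑ l, ∑ k', ∑ l',
        (∑ r, U k l r * V k' l' r * W p.1 q.1 r) *
        (∑ z, A (k, p.2) (l, z) * B (k', z) (l', q.2)) := by
  unfold blinf
  simp only [Finset.mul_sum, Finset.sum_mul]
  conv_lhs => enter [2, r]; rw [Finset.sum_comm]
  conv_lhs => enter [2, r, 2, a]; rw [Finset.sum_comm]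
  conv_lhs => enter [2, r, 2, a, 2, b]; rw [Finset.sum_comm]
  conv_lhs => enter [2, r, 2, a, 2, b, 2, c]; rw [Finset.sum_comm]
  rw [Finset.sum_comm]
  conv_lhs => enter [2, a]; rw [Finset.sum_comm]
  conv_lhs => enter [2, a, 2, b]; rw [Finset.sum_comm]
  conv_lhs => enter [2, a, 2, b, 2, c]; rw [Finset.sum_comm]
  conv_lhs => enter [2, a]; rw [Finset.sum_comm]
  rw [Finset.sum_comm]
  conv_lhs => enter [2, a, 2, b]; rw [Finset.sum_comm]
  conv_lhs => enter [2, a]; rw [Finset.sum_comm]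
  refine Finset.sum_congr rfl fun k _ => Finset.sum_congr rfl fun l _ =>
    Finset.sum_congr rfl fun k' _ => Finset.sum_congr rfl fun l' _ => ?_
  rw [Finset.sum_comm]
  exact Finset.sum_congr rfl fun r _ => Finset.sum_congr rfl fun z _ => by ring

lemma blinf_entry_aux' {n R m : ℕ} (U V W : Fin n → Fin n → Fin R → ℝ)
    (A B : Matrix (Fin n × Fin m) (Fin n × Fin m) ℝ) (p q : Fin n × Fin m) :
    blinf U V W A B p q =
      ∑ t : (Fin n × Fin n) × Fin n × Fin n,
        Ytens U V W t.1.1 t.1.2 t.2.1 t.2.2 p.1 q.1 *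
        (∑ z, A (t.1.1, p.2) (t.1.2, z) * B (t.2.1, z) (t.2.2, q.2)) := by
  rw [blinf_entry_aux]
  simp only [Fintype.sum_prod_type, Ytens]

lemma sum_split_aux {n m : ℕ} (YS : Fin n → Fin n → ℝ) (AS BS : Fin m → ℝ) :
    ∑ p : Fin n × Fin m, ∑ q : Fin n × Fin m, YS p.1 q.1 * (AS p.2 * BS q.2)
      = (∑ p2, AS p2) * (∑ q2, BS q2) * (∑ i, ∑ j, YS i j) := by
  simp only [Fintype.sum_prod_type, Finset.sum_mul, Finset.mul_sum]
  conv_lhs => enter [2, a]; rw [Finset.sum_comm]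
  conv_lhs => enter [2, a, 2, b]; rw [Finset.sum_comm]
  exact Finset.sum_congr rfl fun _ _ => Finset.sum_congr rfl fun _ _ =>
    Finset.sum_congr rfl fun _ _ => Finset.sum_congr rfl fun _ _ => by ring

lemma Asum_aux {n m : ℕ} (A : Matrix (Fin n × Fin m) (Fin n × Fin m) ℝ) :
    ∑ p, ∑ q, (A p q) ^ 2
      = ∑ p2 : Fin m, ∑ a : Fin n × Fin n, ∑ z, (A (a.1, p2) (a.2, z)) ^ 2 := by
  simp only [Fintype.sum_prod_type]
  rw [Finset.sum_comm]

lemma Bsum_aux {n m : ℕ} (B : Matrix (Fin n × Fin m) (Fin n × Fin m) ℝ) :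
    ∑ p, ∑ q, (B p q) ^ 2
      = ∑ q2 : Fin m, ∑ b : Fin n × Fin n, ∑ z, (B (b.1, z) (b.2, q2)) ^ 2 := by
  simp only [Fintype.sum_prod_type]
  conv_lhs => enter [2, a, 2, b]; rw [Finset.sum_comm]
  conv_lhs => enter [2, a]; rw [Finset.sum_comm]
  rw [Finset.sum_comm]
  conv_lhs => enter [2, a, 2, b]; rw [Finset.sum_comm]

lemma Ysum_aux {n : ℕ} (Y : Fin n → Fin n → Fin n → Fin n → Fin n → Fin n → ℝ) :
    ∑ k, ∑ l, ∑ k', ∑ l', ∑ i, ∑ j, (Y k l k' l' i j) ^ 2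
      = ∑ i, ∑ j, ∑ t : (Fin n × Fin n) × Fin n × Fin n,
          (Y t.1.1 t.1.2 t.2.1 t.2.2 i j) ^ 2 := by
  simp only [Fintype.sum_prod_type]
  conv_rhs => enter [2, i]; rw [Finset.sum_comm]
  conv_rhs => enter [2, i, 2, a]; rw [Finset.sum_comm]
  conv_rhs => enter [2, i, 2, a, 2, b]; rw [Finset.sum_comm]
  conv_rhs => enter [2, i, 2, a, 2, b, 2, c]; rw [Finset.sum_comm]
  conv_rhs => rw [Finset.sum_comm]
  conv_rhs => enter [2, a]; rw [Finset.sum_comm]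
  conv_rhs => enter [2, a, 2, b]; rw [Finset.sum_comm]
  conv_rhs => enter [2, a, 2, b, 2, c]; rw [Finset.sum_comm]

lemma key_aux {n R m : ℕ} (U V W : Fin n → Fin n → Fin R → ℝ)
    (A B : Matrix (Fin n × Fin m) (Fin n × Fin m) ℝ) :
    ∑ p, ∑ q, (blinf U V W A B p q) ^ 2 ≤
      (∑ p, ∑ q, (A p q) ^ 2) * (∑ p, ∑ q, (B p q) ^ 2) *
      (∑ k, ∑ l, ∑ k', ∑ l', ∑ i, ∑ j, (Ytens U V W k l k' l' i j) ^ 2) := by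
  have gen1 : ∀ (φ ψ : ((Fin n × Fin n) × Fin n × Fin n) → ℝ),
      (∑ t, φ t * ψ t) ^ 2 ≤ (∑ t, φ t ^ 2) * (∑ t, ψ t ^ 2) :=
    fun φ ψ => Finset.sum_mul_sq_le_sq_mul_sq Finset.univ φ ψ
  have gen2 : ∀ (φ ψ : Fin m → ℝ),
      (∑ z, φ z * ψ z) ^ 2 ≤ (∑ z, φ z ^ 2) * (∑ z, ψ z ^ 2) :=
    fun φ ψ => Finset.sum_mul_sq_le_sq_mul_sq Finset.univ φ ψ
  have step1 : ∀ p q : Fin n × Fin m, (blinf U V W A B p q) ^ 2 ≤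
      (∑ t : (Fin n × Fin n) × Fin n × Fin n,
          (Ytens U V W t.1.1 t.1.2 t.2.1 t.2.2 p.1 q.1) ^ 2) *
      ((∑ a : Fin n × Fin n, ∑ z, (A (a.1, p.2) (a.2, z)) ^ 2) *
       (∑ b : Fin n × Fin n, ∑ z, (B (b.1, z) (b.2, q.2)) ^ 2)) := by
    intro p q
    rw [blinf_entry_aux']
    refine le_trans (gen1 _ _) ?_
    refine mul_le_mul_of_nonneg_left ?_
      (Finset.sum_nonneg fun _ _ => sq_nonneg _)
    refine le_trans (Finset.sum_le_sum fun t _ => gen2 _ _) ?_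
    exact le_of_eq (sum_prod_mul_aux
      (fun a : Fin n × Fin n => ∑ z, (A (a.1, p.2) (a.2, z)) ^ 2)
      (fun b : Fin n × Fin n => ∑ z, (B (b.1, z) (b.2, q.2)) ^ 2))
  calc ∑ p, ∑ q, (blinf U V W A B p q) ^ 2
      ≤ ∑ p : Fin n × Fin m, ∑ q : Fin n × Fin m,
          (∑ t : (Fin n × Fin n) × Fin n × Fin n,
              (Ytens U V W t.1.1 t.1.2 t.2.1 t.2.2 p.1 q.1) ^ 2) *
          ((∑ a : Fin n × Fin n, ∑ z, (A (a.1, p.2) (a.2, z)) ^ 2) *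
           (∑ b : Fin n × Fin n, ∑ z, (B (b.1, z) (b.2, q.2)) ^ 2)) :=
        Finset.sum_le_sum fun p _ => Finset.sum_le_sum fun q _ => step1 p q
    _ = (∑ p2 : Fin m, ∑ a : Fin n × Fin n, ∑ z, (A (a.1, p2) (a.2, z)) ^ 2) *
        (∑ q2 : Fin m, ∑ b : Fin n × Fin n, ∑ z, (B (b.1, z) (b.2, q2)) ^ 2) *
        (∑ i, ∑ j, ∑ t : (Fin n × Fin n) × Fin n × Fin n,
            (Ytens U V W t.1.1 t.1.2 t.2.1 t.2.2 i j) ^ 2) :=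
        sum_split_aux
          (fun i j => ∑ t : (Fin n × Fin n) × Fin n × Fin n,
              (Ytens U V W t.1.1 t.1.2 t.2.1 t.2.2 i j) ^ 2)
          (fun p2 => ∑ a : Fin n × Fin n, ∑ z, (A (a.1, p2) (a.2, z)) ^ 2)
          (fun q2 => ∑ b : Fin n × Fin n, ∑ z, (B (b.1, z) (b.2, q2)) ^ 2)
    _ = (∑ p, ∑ q, (A p q) ^ 2) * (∑ p, ∑ q, (B p q) ^ 2) *
        (∑ k, ∑ l, ∑ k', ∑ l', ∑ i, ∑ j, (Ytens U V W k l k' l' i j) ^ 2) := by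
        rw [← Asum_aux, ← Bsum_aux, ← Ysum_aux]


theorem stmt13 (n R m : ℕ) (hn : 0 < n) (hR : 0 < R) (hm : 1 ≤ m)
    (U V W : Fin n → Fin n → Fin R → ℝ)
    (A B : Matrix (Fin n × Fin m) (Fin n × Fin m) ℝ) :
    frob (blinf U V W A B) ≤ frob A * frob B * frob6 (Ytens U V W) := by
  unfold frob frob6
  have hA : (0:ℝ) ≤ ∑ p, ∑ q, (A p q) ^ 2 :=
    Finset.sum_nonneg fun _ _ => Finset.sum_nonneg fun _ _ => sq_nonneg _
  have hB : (0:ℝ) ≤ ∑ p, ∑ q, (B p q) ^ 2 :=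
    Finset.sum_nonneg fun _ _ => Finset.sum_nonneg fun _ _ => sq_nonneg _
  calc Real.sqrt (∑ p, ∑ q, (blinf U V W A B p q) ^ 2)
      ≤ Real.sqrt ((∑ p, ∑ q, (A p q) ^ 2) * (∑ p, ∑ q, (B p q) ^ 2) *
          (∑ k, ∑ l, ∑ k', ∑ l', ∑ i, ∑ j, (Ytens U V W k l k' l' i j) ^ 2)) :=
        Real.sqrt_le_sqrt (key_aux U V W A B)
    _ = _ := by
        rw [Real.sqrt_mul (mul_nonneg hA hB), Real.sqrt_mul hA]
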